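/- Let X be a Banach space containing a normalized basic sequence satisfying a lower q-estimate for some q < ∞. Then K^s(X) ≥ 2^{1/q}, i.e., for every ε > 0 the unit sphere of X contains a sequence (yₙ) with ‖yₙ ± y_k‖ ≥ 2^{1/q} − ε for all n ≠ k. -/

import Mathlib

/-- A sequence is a basic sequence: all terms are nonzero and it satisfies
Grunblum's criterion. -/
def IsBasicSeq {X : Type*} [NormedAddCommGroup X] [NormedSpace ℝ X]
    (e : ℕ → X) : Prop :=
  (∀ j, e j ≠ 0) ∧ ∃ K : ℝ, ∀ (a : ℕ → ℝ) (m n : ℕ), m ≤ n →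
    ‖∑ j ∈ Finset.range m, a j • e j‖ ≤ K * ‖∑ j ∈ Finset.range n, a j • e j‖

theorem stmt_14 {X : Type*} [NormedAddCommGroup X] [NormedSpace ℝ X]
    [CompleteSpace X] (q : ℝ) (hq : 1 ≤ q)
    (x : ℕ → X) (hbasic : IsBasicSeq x) (hnorm : ∀ n, ‖x n‖ = 1)
    (hlow : ∃ c : ℝ, 0 < c ∧ ∀ (a : ℕ → ℝ) (N : ℕ),
      c * (∑ n ∈ Finset.range N, |a n| ^ q) ^ (1 / q) ≤
        ‖∑ n ∈ Finset.range N, a n • x n‖) :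
    ∀ ε : ℝ, 0 < ε → ∃ y : ℕ → X, (∀ n, ‖y n‖ = 1) ∧
      ∀ n k : ℕ, n ≠ k →
        (2 : ℝ) ^ (1 / q) - ε ≤ ‖y n - y k‖ ∧
        (2 : ℝ) ^ (1 / q) - ε ≤ ‖y n + y k‖ := by
  classical
  obtain ⟨c, hc, hlow⟩ := hlow
  have hq0 : 0 < q := lt_of_lt_of_le one_pos hq
  intro ε hε
  -- Choose a small δ > 0 controlling all the approximations.
  have hδex : ∃ δ : ℝ, 0 < δ ∧ δ < 1 ∧
      (2 : ℝ) ^ (1/q) - ε ≤ (2 * ((1-δ)/(1+δ))) ^ (1/q)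
        - 2 * (1 - ((1-δ)/(1+δ)) ^ (1/q)) := by
    set g : ℝ → ℝ := fun δ =>
      (2 * ((1-δ)/(1+δ))) ^ (1/q) - 2 * (1 - ((1-δ)/(1+δ)) ^ (1/q)) with hg
    have hρc : ContinuousAt (fun δ : ℝ => (1-δ)/(1+δ)) 0 := by
      apply ContinuousAt.div (by fun_prop) (by fun_prop) (by norm_num)
    have hA : ContinuousAt (fun δ : ℝ => (2*((1-δ)/(1+δ))) ^ (1/q)) 0 :=
      ContinuousAt.rpow_const (continuousAt_const.mul hρc) (Or.inl (by norm_num))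
    have hB : ContinuousAt (fun δ : ℝ => ((1-δ)/(1+δ)) ^ (1/q)) 0 :=
      ContinuousAt.rpow_const hρc (Or.inl (by norm_num))
    have hgc : ContinuousAt g 0 :=
      hA.sub (continuousAt_const.mul (continuousAt_const.sub hB))
    have hg0 : g 0 = (2:ℝ) ^ (1/q) := by
      simp [hg, Real.one_rpow]
    have htend : Filter.Tendsto g (nhds 0) (nhds ((2:ℝ) ^ (1/q))) := by
      rw [← hg0]; exact hgc.tendsto
    have hev : ∀ᶠ δ in nhds (0:ℝ),
        ((2:ℝ) ^ (1/q) - ε < g δ ∧ δ < 1) := by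
      refine (htend.eventually (eventually_gt_nhds (by linarith))).and ?_
      exact eventually_lt_nhds one_pos
    have hev2 := eventually_nhdsWithin_of_eventually_nhds (s := Set.Ioi (0:ℝ)) hev
    obtain ⟨δ, hδ⟩ := (hev2.and self_mem_nhdsWithin).exists
    exact ⟨δ, hδ.2, hδ.1.2, hδ.1.1.le⟩
  obtain ⟨δ, hδ0, hδ1, hδε⟩ := hδex
  set ρ : ℝ := (1-δ)/(1+δ) with hρdef
  have hρ0 : 0 < ρ := div_pos (by linarith) (by linarith)
  have hρ1 : ρ ≤ 1 := by rw [div_le_one (by linarith)]; linarith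
  -- the sets of q-sums of coefficients of vectors in the unit ball supported beyond M
  set S : ℕ → Set ℝ := fun M => { s | ∃ (a : ℕ → ℝ) (L : ℕ),
      (∀ j, j < M ∨ L ≤ j → a j = 0) ∧ ‖∑ j ∈ Finset.range L, a j • x j‖ ≤ 1 ∧
      s = ∑ j ∈ Finset.range L, |a j| ^ q } with hSdef
  have hS1 : ∀ M, (1:ℝ) ∈ S M := by
    intro M
    refine ⟨fun j => if j = M then 1 else 0, M+1, ?_, ?_, ?_⟩
    · intro j hj
      have : j ≠ M := by omega
      simp [this]
    · have hsum : ∑ j ∈ Finset.range (M+1), (if j = M then (1:ℝ) else 0) • x j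
          = x M := by
        have : ∀ j ∈ Finset.range (M+1),
            (if j = M then (1:ℝ) else 0) • x j = if j = M then x j else 0 := by
          intro j _; split <;> simp
        rw [Finset.sum_congr rfl this, Finset.sum_ite_eq']
        simp
      rw [hsum, hnorm]
    · have : ∀ j ∈ Finset.range (M+1),
          |if j = M then (1:ℝ) else 0| ^ q = if j = M then 1 else 0 := by
        intro j _
        split <;> simp [Real.zero_rpow hq0.ne']
      rw [Finset.sum_congr rfl this, Finset.sum_ite_eq']
      simp
  have hSne : ∀ M, (S M).Nonempty := fun M => ⟨1, hS1 M⟩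
  have hSbdd : ∀ M, BddAbove (S M) := by
    intro M
    refine ⟨(1/c) ^ q, ?_⟩
    rintro s ⟨a, L, -, hnle, rfl⟩
    have h1 := hlow a L
    have hs0 : 0 ≤ ∑ j ∈ Finset.range L, |a j| ^ q :=
      Finset.sum_nonneg fun j _ => Real.rpow_nonneg (abs_nonneg _) q
    have h2 : (∑ j ∈ Finset.range L, |a j| ^ q) ^ (1/q) ≤ 1/c := by
      rw [le_div_iff₀ hc, mul_comm]
      exact le_trans h1 hnle
    calc ∑ j ∈ Finset.range L, |a j| ^ q
        = ((∑ j ∈ Finset.range L, |a j| ^ q) ^ (1/q)) ^ q := by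
          rw [one_div, Real.rpow_inv_rpow hs0 hq0.ne']
      _ ≤ (1/c) ^ q :=
          Real.rpow_le_rpow (Real.rpow_nonneg hs0 _) h2 hq0.le
  set T : ℕ → ℝ := fun M => sSup (S M) with hTdef
  have hT1 : ∀ M, 1 ≤ T M := fun M => le_csSup (hSbdd M) (hS1 M)
  have hTanti : ∀ M M', M ≤ M' → T M' ≤ T M := by
    intro M M' h
    apply csSup_le_csSup (hSbdd M) (hSne M')
    rintro s ⟨a, L, ha, h2, h3⟩
    exact ⟨a, L, fun j hj => ha j (by omega), h2, h3⟩
  set Ti : ℝ := ⨅ M, T M with hTidef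
  have hbddT : BddBelow (Set.range T) := ⟨1, by rintro _ ⟨M, rfl⟩; exact hT1 M⟩
  have hTi1 : 1 ≤ Ti := le_ciInf hT1
  have hTile : ∀ M, Ti ≤ T M := fun M => ciInf_le hbddT M
  obtain ⟨N, hN⟩ : ∃ M, T M < Ti + δ := exists_lt_of_ciInf_lt (by linarith)
  -- key upper bound: q-sum of coefficients is at most ‖v‖^q * T N
  have key : ∀ (f : ℕ → ℝ) (L : ℕ), (∀ j, j < N → f j = 0) →
      ∑ j ∈ Finset.range L, |f j| ^ q ≤
        ‖∑ j ∈ Finset.range L, f j • x j‖ ^ q * T N := by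
    intro f L hf
    set v := ∑ j ∈ Finset.range L, f j • x j with hv
    have hs0 : 0 ≤ ∑ j ∈ Finset.range L, |f j| ^ q :=
      Finset.sum_nonneg fun j _ => Real.rpow_nonneg (abs_nonneg _) q
    rcases eq_or_lt_of_le (norm_nonneg v) with h0 | h0
    · have h1 := hlow f L
      rw [← hv, ← h0] at h1
      have ht0 : (∑ j ∈ Finset.range L, |f j| ^ q) ^ (1/q) ≤ 0 := by nlinarith
      have heq : (∑ j ∈ Finset.range L, |f j| ^ q) ^ (1/q) = 0 :=
        le_antisymm ht0 (Real.rpow_nonneg hs0 _)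
      have hzz : ∑ j ∈ Finset.range L, |f j| ^ q = 0 := by
        have h2 := congrArg (· ^ q) heq
        simp only [one_div] at h2
        rwa [Real.rpow_inv_rpow hs0 hq0.ne', Real.zero_rpow hq0.ne'] at h2
      rw [hzz]
      exact mul_nonneg (Real.rpow_nonneg (norm_nonneg _) _) (by linarith [hT1 N])
    · have hmem : (∑ j ∈ Finset.range L, |f j| ^ q) / ‖v‖ ^ q ∈ S N := by
        refine ⟨fun j => if j < L then f j / ‖v‖ else 0, L, ?_, ?_, ?_⟩
        · intro j hj
          rcases hj with hj | hj
          · simp [hf j hj]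
          · simp [Nat.not_lt.2 hj]
        · have hsum : ∑ j ∈ Finset.range L,
              (if j < L then f j / ‖v‖ else 0) • x j = ‖v‖⁻¹ • v := by
            rw [hv, Finset.smul_sum]
            apply Finset.sum_congr rfl
            intro j hj
            rw [if_pos (Finset.mem_range.1 hj), div_eq_inv_mul, mul_smul]
          rw [hsum, norm_smul, norm_inv, norm_norm, inv_mul_cancel₀ h0.ne']
        · rw [Finset.sum_div]
          apply Finset.sum_congr rfl
          intro j hj
          rw [Finset.mem_range] at hj
          simp only [hj, if_true]
          rw [abs_div, abs_of_pos h0,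
            Real.div_rpow (abs_nonneg _) (norm_nonneg v)]
      have hle : (∑ j ∈ Finset.range L, |f j| ^ q) / ‖v‖ ^ q ≤ T N :=
        le_csSup (hSbdd N) hmem
      rw [div_le_iff₀ (Real.rpow_pos_of_pos h0 q)] at hle
      linarith
  -- selection of blocks
  have hsel : ∀ m : ℕ, ∃ (a : ℕ → ℝ) (L : ℕ),
      (∀ j, j < max m N ∨ L ≤ j → a j = 0) ∧
      ‖∑ j ∈ Finset.range L, a j • x j‖ ≤ 1 ∧
      Ti - δ < ∑ j ∈ Finset.range L, |a j| ^ q := by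
    intro m
    obtain ⟨s, hsmem, hs⟩ := exists_lt_of_lt_csSup (hSne (max m N))
      (show Ti - δ < T (max m N) by linarith [hTile (max m N)])
    obtain ⟨a, L, h1, h2, h3⟩ := hsmem
    exact ⟨a, L, h1, h2, h3 ▸ hs⟩
  choose A Lf hA1 hA2 hA3 using hsel
  set st : ℕ → ℕ := fun n => Nat.rec N (fun _ s => max (s+1) (Lf s)) n with hst
  have hstsucc : ∀ n, st (n+1) = max (st n + 1) (Lf (st n)) := fun n => rfl
  have hstlt : ∀ n, st n < st (n+1) := by
    intro n; rw [hstsucc]; omega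
  have hstmono : StrictMono st := strictMono_nat_of_lt_succ hstlt
  have hstN : ∀ n, N ≤ st n := by
    intro n
    induction n with
    | zero => rfl
    | succ n ih => have := hstlt n; omega
  have hmax : ∀ n, max (st n) N = st n := fun n => max_eq_left (hstN n)
  have hA1' : ∀ n j, j < st n ∨ Lf (st n) ≤ j → A (st n) j = 0 := by
    intro n j hj
    apply hA1 (st n) j
    rw [hmax n]
    exact hj
  set u : ℕ → X := fun n => ∑ j ∈ Finset.range (Lf (st n)), A (st n) j • x j
    with hu
  set sq : ℕ → ℝ := fun n => ∑ j ∈ Finset.range (Lf (st n)), |A (st n) j| ^ q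
    with hsq
  have hsq_lb : ∀ n, Ti - δ < sq n := fun n => hA3 (st n)
  have hu1 : ∀ n, ‖u n‖ ≤ 1 := fun n => hA2 (st n)
  have hsupN : ∀ n j, j < N → A (st n) j = 0 :=
    fun n j hj => hA1' n j (Or.inl (lt_of_lt_of_le hj (hstN n)))
  -- generic fraction bound
  have hfrac : ∀ t w : ℝ, 0 ≤ t → 0 ≤ w → t * (Ti - δ) ≤ w * T N → t * ρ ≤ w := by
    intro t w ht hw h
    have h2 : w * T N ≤ w * (Ti + δ) := mul_le_mul_of_nonneg_left hN.le hw
    rw [hρdef, ← mul_div_assoc, div_le_iff₀ (by linarith)]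
    nlinarith [mul_le_mul_of_nonneg_right (le_trans h h2) (by linarith : (0:ℝ) ≤ 1+δ),
      mul_nonneg (mul_nonneg ht hδ0.le) (by linarith : (0:ℝ) ≤ Ti - 1)]
  have hun_lb : ∀ n, ρ ≤ ‖u n‖ ^ q := by
    intro n
    have h := key (A (st n)) (Lf (st n)) (hsupN n)
    have := hfrac 1 (‖u n‖ ^ q) zero_le_one (Real.rpow_nonneg (norm_nonneg _) _)
      (by rw [one_mul]; exact le_trans (hsq_lb n).le h)
    linarith
  have hρq : (0:ℝ) < ρ ^ (1/q) := Real.rpow_pos_of_pos hρ0 _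
  have hun_lb' : ∀ n, ρ ^ (1/q) ≤ ‖u n‖ := by
    intro n
    have h := Real.rpow_le_rpow hρ0.le (hun_lb n) (by positivity : (0:ℝ) ≤ 1/q)
    rw [one_div] at h ⊢
    rwa [Real.rpow_rpow_inv (norm_nonneg _) hq0.ne'] at h
  have hun_pos : ∀ n, 0 < ‖u n‖ := fun n => lt_of_lt_of_le hρq (hun_lb' n)
  -- pair estimate
  have hpair : ∀ n k : ℕ, n < k → ∀ e : ℝ, e = 1 ∨ e = -1 →
      (2 * ρ) ^ (1/q) ≤ ‖u n + e • u k‖ := by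
    intro n k hnk e he
    have hL1m2 : Lf (st n) ≤ st k := by
      have h1 : Lf (st n) ≤ st (n+1) := by rw [hstsucc]; omega
      exact le_trans h1 (hstmono.monotone hnk)
    have hm2L2 : st k < Lf (st k) := by
      by_contra hcon
      push_neg at hcon
      have hz : sq k = 0 := by
        apply Finset.sum_eq_zero
        intro j hj
        have hj' : j < st k := lt_of_lt_of_le (Finset.mem_range.1 hj) hcon
        rw [hA1' k j (Or.inl hj'), abs_zero, Real.zero_rpow hq0.ne']
      have hlt := hsq_lb k
      rw [hz] at hlt
      linarith
    have hL1L2 : Lf (st n) ≤ Lf (st k) := le_trans hL1m2 hm2L2.le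
    set b' : ℕ → ℝ := fun j => A (st n) j + e * A (st k) j with hb'
    have habs : ∀ j, |e * A (st k) j| = |A (st k) j| := by
      intro j
      rcases he with rfl | rfl <;> simp
    -- sum identity
    have hsum : ∑ j ∈ Finset.range (Lf (st k)), b' j • x j = u n + e • u k := by
      have h1 : ∀ j ∈ Finset.range (Lf (st k)),
          b' j • x j = A (st n) j • x j + e • (A (st k) j • x j) := by
        intro j _
        rw [hb']
        simp only [add_smul, mul_smul]
      rw [Finset.sum_congr rfl h1, Finset.sum_add_distrib, ← Finset.smul_sum]
      congr 1
      show (∑ j ∈ Finset.range (Lf (st k)), A (st n) j • x j)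
          = ∑ j ∈ Finset.range (Lf (st n)), A (st n) j • x j
      symm
      apply Finset.sum_subset (Finset.range_subset_range.2 hL1L2)
      intro j _ hj
      rw [hA1' n j (Or.inr (by simpa using hj)), zero_smul]
    -- q-sum identity
    have hqsum : ∑ j ∈ Finset.range (Lf (st k)), |b' j| ^ q = sq n + sq k := by
      have h1 : ∀ j ∈ Finset.range (Lf (st k)),
          |b' j| ^ q = |A (st n) j| ^ q + |A (st k) j| ^ q := by
        intro j _
        show |A (st n) j + e * A (st k) j| ^ q
            = |A (st n) j| ^ q + |A (st k) j| ^ q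
        rcases lt_or_ge j (st k) with hj | hj
        · rw [hA1' k j (Or.inl hj)]
          simp [Real.zero_rpow hq0.ne']
        · have hzn : A (st n) j = 0 :=
            hA1' n j (Or.inr (le_trans hL1m2 hj))
          simp only [hzn, zero_add, habs j, abs_zero, Real.zero_rpow hq0.ne']
      rw [Finset.sum_congr rfl h1, Finset.sum_add_distrib]
      congr 1
      show (∑ j ∈ Finset.range (Lf (st k)), |A (st n) j| ^ q)
          = ∑ j ∈ Finset.range (Lf (st n)), |A (st n) j| ^ q
      symm
      apply Finset.sum_subset (Finset.range_subset_range.2 hL1L2)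
      intro j _ hj
      rw [hA1' n j (Or.inr (by simpa using hj)), abs_zero,
        Real.zero_rpow hq0.ne']
    have hbsup : ∀ j, j < N → b' j = 0 := by
      intro j hj
      show A (st n) j + e * A (st k) j = 0
      rw [hsupN n j hj, hA1' k j (Or.inl (lt_of_lt_of_le hj (hstN k)))]
      ring
    have hk := key b' (Lf (st k)) hbsup
    rw [hqsum, hsum] at hk
    have h2 : 2 * (Ti - δ) ≤ sq n + sq k := by
      have := hsq_lb n; have := hsq_lb k; linarith
    have h3 : 2 * ρ ≤ ‖u n + e • u k‖ ^ q :=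
      hfrac 2 _ (by norm_num) (Real.rpow_nonneg (norm_nonneg _) _)
        (le_trans h2 hk)
    have h4 := Real.rpow_le_rpow (by positivity) h3 (by positivity : (0:ℝ) ≤ 1/q)
    rw [one_div] at h4 ⊢
    rwa [Real.rpow_rpow_inv (norm_nonneg _) hq0.ne'] at h4
  -- normalized sequence
  set y : ℕ → X := fun n => ‖u n‖⁻¹ • u n with hy
  have hynorm : ∀ n, ‖y n‖ = 1 := by
    intro n
    rw [hy]
    simp only [norm_smul, norm_inv, norm_norm]
    exact inv_mul_cancel₀ (hun_pos n).ne'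
  have hyd : ∀ n, ‖y n - u n‖ ≤ 1 - ρ ^ (1/q) := by
    intro n
    have h1 : y n - u n = (‖u n‖⁻¹ - 1) • u n := by
      rw [hy, sub_smul, one_smul]
    rw [h1, norm_smul, Real.norm_eq_abs,
      abs_of_nonneg (by
        have := one_le_inv_iff₀.2 ⟨hun_pos n, hu1 n⟩
        linarith)]
    have h2 : (‖u n‖⁻¹ - 1) * ‖u n‖ = 1 - ‖u n‖ := by
      rw [sub_mul, inv_mul_cancel₀ (hun_pos n).ne', one_mul]
    rw [h2]
    linarith [hun_lb' n]
  refine ⟨y, hynorm, ?_⟩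
  have main : ∀ n k : ℕ, n < k →
      (2:ℝ) ^ (1/q) - ε ≤ ‖y n - y k‖ ∧ (2:ℝ) ^ (1/q) - ε ≤ ‖y n + y k‖ := by
    intro n k hnk
    constructor
    · have hp := hpair n k hnk (-1) (Or.inr rfl)
      have heq : u n + (-1 : ℝ) • u k = u n - u k := by
        rw [neg_one_smul]; abel
      rw [heq] at hp
      have htri : ‖u n - u k‖ ≤ ‖y n - y k‖ + ‖y n - u n‖ + ‖y k - u k‖ := by
        have : u n - u k = (y n - y k) - (y n - u n) + (y k - u k) := by abel
        rw [this]
        calc ‖(y n - y k) - (y n - u n) + (y k - u k)‖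
            ≤ ‖(y n - y k) - (y n - u n)‖ + ‖y k - u k‖ := norm_add_le _ _
          _ ≤ ‖y n - y k‖ + ‖y n - u n‖ + ‖y k - u k‖ := by
              have := norm_sub_le (y n - y k) (y n - u n)
              linarith
      have := hyd n; have := hyd k
      have hfin : (2 * ρ) ^ (1/q) - 2 * (1 - ρ ^ (1/q)) ≤ ‖y n - y k‖ := by
        linarith
      linarith [hδε]
    · have hp := hpair n k hnk 1 (Or.inl rfl)
      rw [one_smul] at hp
      have htri : ‖u n + u k‖ ≤ ‖y n + y k‖ + ‖y n - u n‖ + ‖y k - u k‖ := by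
        have : u n + u k = (y n + y k) - (y n - u n) - (y k - u k) := by abel
        rw [this]
        calc ‖(y n + y k) - (y n - u n) - (y k - u k)‖
            ≤ ‖(y n + y k) - (y n - u n)‖ + ‖y k - u k‖ := norm_sub_le _ _
          _ ≤ ‖y n + y k‖ + ‖y n - u n‖ + ‖y k - u k‖ := by
              have := norm_sub_le (y n + y k) (y n - u n)
              linarith
      have := hyd n; have := hyd k
      have hfin : (2 * ρ) ^ (1/q) - 2 * (1 - ρ ^ (1/q)) ≤ ‖y n + y k‖ := by
        linarith
      linarith [hδε]
  intro n k hnk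
  rcases lt_or_gt_of_ne hnk with h | h
  · exact main n k h
  · obtain ⟨h1, h2⟩ := main k n h
    rw [norm_sub_rev, add_comm] at *
    exact ⟨by rwa [norm_sub_rev], by rwa [add_comm]⟩
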